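/- For each natural n ≥ 1, 1 − (n + 1/2) ln(1 + 1/n) = ∫₀^∞ e^{-np} (1 − p/2 − (p/2 + 1)e^{-p}) / p² dp. -/

import Mathlib

open MeasureTheory Set Real Filter

private lemma inner_u (n : ℕ) {p : ℝ} (hp : 0 < p) :
    ∫ u in Set.Ioc (n : ℝ) ((n : ℝ) + 1), (u - ((n : ℝ) + 1 / 2)) * Real.exp (-u * p) =
      Real.exp (-(n : ℝ) * p) * (1 - p / 2 - (p / 2 + 1) * Real.exp (-p)) / p ^ 2 := by
  set c : ℝ := (n : ℝ) + 1 / 2 with hc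
  have hle : (n : ℝ) ≤ (n : ℝ) + 1 := by linarith
  rw [← intervalIntegral.integral_of_le hle]
  have hderiv : ∀ u ∈ Set.uIcc (n : ℝ) ((n : ℝ) + 1),
      HasDerivAt (fun u : ℝ => -(u - c) * Real.exp (-u * p) / p - Real.exp (-u * p) / p ^ 2)
        ((u - c) * Real.exp (-u * p)) u := by
    intro u _
    have he : HasDerivAt (fun u : ℝ => Real.exp (-u * p)) (-p * Real.exp (-u * p)) u := by
      have h1 : HasDerivAt (fun u : ℝ => -u * p) (-p) u := by
        simpa using ((hasDerivAt_id u).neg.mul_const p)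
      simpa [mul_comm] using h1.exp
    have h2 : HasDerivAt (fun u : ℝ => -(u - c)) (-1) u := by
      exact ((hasDerivAt_id u).sub_const c).neg
    have h3 := ((h2.mul he).div_const p).sub (he.div_const (p ^ 2))
    refine h3.congr_deriv ?_
    field_simp
    ring
  have hint : IntervalIntegrable (fun u : ℝ => (u - c) * Real.exp (-u * p)) volume
      (n : ℝ) ((n : ℝ) + 1) := by
    apply Continuous.intervalIntegrable
    continuity
  rw [intervalIntegral.integral_eq_sub_of_hasDerivAt hderiv hint]
  have hexp : Real.exp (-((n : ℝ) + 1) * p) = Real.exp (-(n : ℝ) * p) * Real.exp (-p) := by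
    rw [← Real.exp_add]; ring_nf
  rw [hexp, hc]
  field_simp
  ring

private lemma inner_p {u : ℝ} (c : ℝ) (hu : 0 < u) :
    ∫ p in Set.Ioi (0 : ℝ), (u - c) * Real.exp (-u * p) = (u - c) / u := by
  have hderiv : ∀ p ∈ Set.Ici (0 : ℝ),
      HasDerivAt (fun p : ℝ => -(u - c) * Real.exp (-u * p) / u)
        ((u - c) * Real.exp (-u * p)) p := by
    intro p _
    have he : HasDerivAt (fun p : ℝ => Real.exp (-u * p)) (-u * Real.exp (-u * p)) p := by
      have h1 : HasDerivAt (fun p : ℝ => -u * p) (-u) p := by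
        simpa using (hasDerivAt_id p).const_mul (-u)
      simpa [mul_comm] using h1.exp
    have h3 := (he.const_mul (-(u - c))).div_const u
    refine h3.congr_deriv ?_
    field_simp
  have hint : IntegrableOn (fun p : ℝ => (u - c) * Real.exp (-u * p)) (Set.Ioi 0) := by
    exact (exp_neg_integrableOn_Ioi 0 hu).const_mul _
  have htend : Tendsto (fun p : ℝ => -(u - c) * Real.exp (-u * p) / u) atTop (nhds 0) := by
    have h0 : Tendsto (fun p : ℝ => Real.exp (-u * p)) atTop (nhds 0) :=
      Real.tendsto_exp_atBot.comp (tendsto_id.const_mul_atTop_of_neg (by linarith))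
    have := (h0.const_mul (-(u - c))).div_const u
    simpa using this
  have := integral_Ioi_of_hasDerivAt_of_tendsto' hderiv hint htend
  rw [this]
  simp
  field_simp
  ring

theorem stmt11 (n : ℕ) (hn : 1 ≤ n) :
    1 - ((n : ℝ) + 1 / 2) * Real.log (1 + 1 / (n : ℝ)) =
      ∫ p in Ioi (0 : ℝ),
        Real.exp (-(n : ℝ) * p) * (1 - p / 2 - (p / 2 + 1) * Real.exp (-p)) / p ^ 2 := by
  have hn0 : (0 : ℝ) < (n : ℝ) := by exact_mod_cast hn
  set c : ℝ := (n : ℝ) + 1 / 2 with hc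
  set f : ℝ → ℝ → ℝ := fun p u => (u - c) * Real.exp (-u * p) with hf
  have hcont : Continuous (Function.uncurry f) := by
    apply Continuous.mul
    · exact (continuous_snd.sub continuous_const)
    · exact (continuous_snd.neg.mul continuous_fst).rexp
  -- Step 1: rewrite the integrand as an inner integral
  have step1 : (∫ p in Ioi (0 : ℝ),
        Real.exp (-(n : ℝ) * p) * (1 - p / 2 - (p / 2 + 1) * Real.exp (-p)) / p ^ 2)
      = ∫ p in Ioi (0 : ℝ), ∫ u in Set.Ioc (n : ℝ) ((n : ℝ) + 1), f p u := by
    refine (setIntegral_congr_fun measurableSet_Ioi (fun p hp => ?_)).symm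
    exact inner_u n hp
  -- Step 2: Fubini
  have hInt : Integrable (Function.uncurry f)
      ((volume.restrict (Ioi (0 : ℝ))).prod (volume.restrict (Set.Ioc (n : ℝ) ((n : ℝ) + 1)))) := by
    rw [integrable_prod_iff hcont.aestronglyMeasurable]
    constructor
    · refine Filter.Eventually.of_forall (fun p => ?_)
      exact (hcont.comp (Continuous.prodMk_right p)).integrableOn_Ioc
    · have hb : Integrable (fun p : ℝ => (1 / 2) * Real.exp (-(n : ℝ) * p))
          (volume.restrict (Ioi (0 : ℝ))) := (exp_neg_integrableOn_Ioi 0 hn0).const_mul _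
      refine hb.mono
        (hcont.aestronglyMeasurable.norm.integral_prod_right') ?_
      rw [ae_restrict_iff' measurableSet_Ioi]
      refine Filter.Eventually.of_forall (fun p hp => ?_)
      have hp : 0 < p := hp
      have hbound : ∫ u in Set.Ioc (n : ℝ) ((n : ℝ) + 1), ‖f p u‖
          ≤ ∫ u in Set.Ioc (n : ℝ) ((n : ℝ) + 1), (1 / 2) * Real.exp (-(n : ℝ) * p) := by
        refine setIntegral_mono_on
          ((hcont.comp (Continuous.prodMk_right p)).norm.integrableOn_Ioc)
          (integrableOn_const (by simp)) measurableSet_Ioc (fun u hu => ?_)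
        have h1 : |u - c| ≤ 1 / 2 := by
          rw [abs_le]; constructor <;> [skip; skip] <;> simp [hc] at hu ⊢ <;> cases hu <;> linarith
        have h2 : Real.exp (-u * p) ≤ Real.exp (-(n : ℝ) * p) := by
          apply Real.exp_le_exp.2
          have := hu.1
          nlinarith
        calc ‖f p u‖ = |u - c| * Real.exp (-u * p) := by
              simp [hf, abs_mul, abs_of_pos (Real.exp_pos _)]
          _ ≤ (1 / 2) * Real.exp (-(n : ℝ) * p) :=
              mul_le_mul h1 h2 (Real.exp_pos _).le (by norm_num)
      have hnn : 0 ≤ ∫ u in Set.Ioc (n : ℝ) ((n : ℝ) + 1), ‖f p u‖ :=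
        integral_nonneg (fun u => norm_nonneg _)
      simp only [Function.uncurry_apply_pair]
      rw [Real.norm_eq_abs, Real.norm_eq_abs, abs_of_nonneg hnn,
        abs_of_pos (by positivity)]
      calc ∫ u in Set.Ioc (n : ℝ) ((n : ℝ) + 1), ‖f p u‖
          ≤ ∫ u in Set.Ioc (n : ℝ) ((n : ℝ) + 1), (1 / 2) * Real.exp (-(n : ℝ) * p) := hbound
        _ = (1 / 2) * Real.exp (-(n : ℝ) * p) := by
            rw [setIntegral_const]
            simp [Real.volume_Ioc]
  have step2 : (∫ p in Ioi (0 : ℝ), ∫ u in Set.Ioc (n : ℝ) ((n : ℝ) + 1), f p u)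
      = ∫ u in Set.Ioc (n : ℝ) ((n : ℝ) + 1), ∫ p in Ioi (0 : ℝ), f p u :=
    integral_integral_swap hInt
  -- Step 3: inner p-integral
  have step3 : (∫ u in Set.Ioc (n : ℝ) ((n : ℝ) + 1), ∫ p in Ioi (0 : ℝ), f p u)
      = ∫ u in Set.Ioc (n : ℝ) ((n : ℝ) + 1), (u - c) / u := by
    refine setIntegral_congr_fun measurableSet_Ioc (fun u hu => ?_)
    have hu0 : 0 < u := lt_of_le_of_lt hn0.le (by exact_mod_cast hu.1)
    exact inner_p c hu0
  -- Step 4: compute the u-integral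
  have step4 : (∫ u in Set.Ioc (n : ℝ) ((n : ℝ) + 1), (u - c) / u)
      = 1 - c * Real.log (1 + 1 / (n : ℝ)) := by
    rw [← intervalIntegral.integral_of_le (by linarith : (n : ℝ) ≤ (n : ℝ) + 1)]
    have heq : ∀ u ∈ Set.uIcc (n : ℝ) ((n : ℝ) + 1), (u - c) / u = 1 - c * u⁻¹ := by
      intro u hu
      rw [Set.uIcc_of_le (by linarith)] at hu
      have hu0 : 0 < u := lt_of_lt_of_le hn0 hu.1
      field_simp
    rw [intervalIntegral.integral_congr heq]
    have hi : IntervalIntegrable (fun u : ℝ => c * u⁻¹) volume (n : ℝ) ((n : ℝ) + 1) := by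
      apply ContinuousOn.intervalIntegrable
      refine continuousOn_const.mul (ContinuousOn.inv₀ continuousOn_id (fun u hu => ?_))
      rw [Set.uIcc_of_le (by linarith)] at hu
      exact (lt_of_lt_of_le hn0 hu.1).ne'
    rw [intervalIntegral.integral_sub intervalIntegrable_const hi]
    rw [intervalIntegral.integral_const_mul, integral_inv_of_pos hn0 (by linarith)]
    have : ((n : ℝ) + 1) / (n : ℝ) = 1 + 1 / (n : ℝ) := by field_simp
    rw [this]
    simp
  rw [step1, step2, step3, step4, hc]
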